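/- arXiv:1501.01259 — 2 statements merged into one kernel-verified Lean document; each statement's English description precedes it below -/
import Mathlib

section
/- Let X be a cocompact G-cell complex with trivial first homology over ℤ and fine 1-skeleton, where G-stabilizers of 1-cells are finite. Then FV_{X,ℤ}(k) < ∞ for every integer k. -/
open Finsupp

/-- A (combinatorial, oriented) graph: the 1-skeleton data of a complex. -/
structure CGraph where
  V : Type
  E : Type
  ends : E → V × V

/-- ℓ¹-norm of an integral chain. -/
def l1Z {α : Type} (c : α →₀ ℤ) : ℕ := c.sum fun _ v => v.natAbs

/-- Two chains are disjoint if no basis element has nonzero coefficient in both. -/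
def DisjointChains {α : Type} (a b : α →₀ ℤ) : Prop := ∀ x, a x = 0 ∨ b x = 0

namespace CGraph

variable (Γ : CGraph)

/-- Source vertex of a directed edge (an edge with an orientation bit). -/
def src (p : Γ.E × Bool) : Γ.V := if p.2 then (Γ.ends p.1).1 else (Γ.ends p.1).2

/-- Target vertex of a directed edge. -/
def tgt (p : Γ.E × Bool) : Γ.V := if p.2 then (Γ.ends p.1).2 else (Γ.ends p.1).1

/-- A nonempty cyclically-consecutive list of directed edges. -/
def IsClosedPath (l : List (Γ.E × Bool)) : Prop :=
  l ≠ [] ∧ ∀ i : Fin l.length,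
    Γ.tgt (l.get i) = Γ.src (l.get ⟨(↑i + 1) % l.length, Nat.mod_lt _ i.pos⟩)

/-- A circuit: a simple closed combinatorial path (no repeated edges or vertices). -/
def IsCircuit (l : List (Γ.E × Bool)) : Prop :=
  Γ.IsClosedPath l ∧ (l.map Prod.fst).Nodup ∧ (l.map Γ.src).Nodup

/-- The 1-cycle induced by a closed path: coefficient ±1 on each traversed edge. -/
noncomputable def pathCycle (l : List (Γ.E × Bool)) : Γ.E →₀ ℤ :=
  (l.map fun p => Finsupp.single p.1 (if p.2 then (1 : ℤ) else -1)).sum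

/-- The simplicial boundary map `C₁ → C₀`. -/
noncomputable def d1 (γ : Γ.E →₀ ℤ) : Γ.V →₀ ℤ :=
  γ.sum fun e c => c • (Finsupp.single (Γ.ends e).2 (1 : ℤ) - Finsupp.single (Γ.ends e).1 1)

/-- A 1-chain is a cycle if its boundary vanishes. -/
def IsCycle (γ : Γ.E →₀ ℤ) : Prop := Γ.d1 γ = 0

/-- A graph is fine if each edge lies in only finitely many circuits of each bounded length. -/
def Fine : Prop :=
  ∀ (e : Γ.E) (L : ℕ),
    {l : List (Γ.E × Bool) | Γ.IsCircuit l ∧ e ∈ l.map Prod.fst ∧ l.length ≤ L}.Finite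

/-- Walks from `u` to `v`. -/
def IsWalk : List (Γ.E × Bool) → Γ.V → Γ.V → Prop
  | [], u, v => u = v
  | p :: l, u, v => Γ.src p = u ∧ IsWalk l (Γ.tgt p) v

/-- Combinatorial distance in a graph (∞ if there is no walk). -/
noncomputable def gdist (u v : Γ.V) : ℕ∞ :=
  ⨅ l ∈ {l : List (Γ.E × Bool) | Γ.IsWalk l u v}, (l.length : ℕ∞)

def Connected : Prop := ∀ u v : Γ.V, Γ.gdist u v < ⊤

/-- Gromov hyperbolicity via the four-point condition. -/
def Hyperbolic : Prop :=
  ∃ δ : ℕ, ∀ x y z w : Γ.V,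
    Γ.gdist x y + Γ.gdist z w ≤
      max (Γ.gdist x z + Γ.gdist y w) (Γ.gdist x w + Γ.gdist y z) + (δ : ℕ∞)

end CGraph

/-- A combinatorial 2-complex: a graph together with a set of 2-cells, each with a
boundary 1-chain. -/
structure TwoComplex extends CGraph where
  F : Type
  fb : F → E →₀ ℤ

namespace TwoComplex

variable (X : TwoComplex)

/-- The boundary map `C₂ → C₁` over ℤ. -/
noncomputable def d2 (μ : X.F →₀ ℤ) : X.E →₀ ℤ := μ.sum fun f c => c • X.fb f

/-- The filling norm `‖γ‖_∂` over ℤ (∞ if `γ` bounds no 2-chain). -/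
noncomputable def fillNorm (γ : X.E →₀ ℤ) : ℕ∞ :=
  ⨅ μ ∈ {μ : X.F →₀ ℤ | X.d2 μ = γ}, (l1Z μ : ℕ∞)

/-- The homological Dehn function of `X` over ℤ. -/
noncomputable def FV (k : ℕ) : ℕ∞ :=
  ⨆ γ ∈ {γ : X.E →₀ ℤ | X.toCGraph.IsCycle γ ∧ l1Z γ ≤ k}, X.fillNorm γ

end TwoComplex

/-- A cellular action of a group `G` on a 2-complex `X`: `G` permutes the cells of each
dimension, compatibly with endpoints and boundaries. -/
structure ComplexAction (G : Type) [Group G] (X : TwoComplex) where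
  vMap : G → X.V ≃ X.V
  eMap : G → X.E ≃ X.E
  fMap : G → X.F ≃ X.F
  vMap_mul : ∀ g h v, vMap (g * h) v = vMap g (vMap h v)
  eMap_mul : ∀ g h e, eMap (g * h) e = eMap g (eMap h e)
  fMap_mul : ∀ g h f, fMap (g * h) f = fMap g (fMap h f)
  ends_eq : ∀ g e, X.ends (eMap g e) = (vMap g (X.ends e).1, vMap g (X.ends e).2)
  fb_eq : ∀ g f, X.fb (fMap g f) = (X.fb f).mapDomain (eMap g)

/-- The action is cocompact: finitely many orbits of cells in each dimension. -/
def ComplexAction.Cocompact {G : Type} [Group G] {X : TwoComplex}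
    (A : ComplexAction G X) : Prop :=
  (∃ s : Set X.V, s.Finite ∧ ∀ v, ∃ g, A.vMap g v ∈ s) ∧
  (∃ s : Set X.E, s.Finite ∧ ∀ e, ∃ g, A.eMap g e ∈ s) ∧
  (∃ s : Set X.F, s.Finite ∧ ∀ f, ∃ g, A.fMap g f ∈ s)

section AuxProofs

open Finsupp

/-! ### `l1Z` lemmas -/

lemma aux_l1Z_eq_sum {α : Type} (c : α →₀ ℤ) (s : Finset α) (hs : c.support ⊆ s) :
    l1Z c = ∑ x ∈ s, (c x).natAbs :=
  Finsupp.sum_of_support_subset c hs _ (fun _ _ => rfl)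

lemma aux_l1Z_zero {α : Type} : l1Z (0 : α →₀ ℤ) = 0 := Finsupp.sum_zero_index

lemma aux_l1Z_add_le {α : Type} (a b : α →₀ ℤ) : l1Z (a + b) ≤ l1Z a + l1Z b := by
  classical
  rw [aux_l1Z_eq_sum (a + b) (a.support ∪ b.support) Finsupp.support_add,
      aux_l1Z_eq_sum a (a.support ∪ b.support) Finset.subset_union_left,
      aux_l1Z_eq_sum b (a.support ∪ b.support) Finset.subset_union_right,
      ← Finset.sum_add_distrib]
  refine Finset.sum_le_sum fun x _ => ?_
  rw [Finsupp.add_apply]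
  exact Int.natAbs_add_le _ _

lemma aux_eq_zero_of_l1Z {α : Type} {c : α →₀ ℤ} (h : l1Z c = 0) : c = 0 := by
  ext x
  by_contra hx
  have hxs : x ∈ c.support := Finsupp.mem_support_iff.2 (by simpa using hx)
  have h0 : l1Z c = ∑ x ∈ c.support, (c x).natAbs := aux_l1Z_eq_sum c _ le_rfl
  rw [h0] at h
  have := Finset.sum_eq_zero_iff.mp h x hxs
  simp only [Int.natAbs_eq_zero] at this
  exact (Finsupp.mem_support_iff.1 hxs) this

lemma aux_card_support_le_l1Z {α : Type} (c : α →₀ ℤ) : c.support.card ≤ l1Z c := by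
  rw [aux_l1Z_eq_sum c _ le_rfl]
  calc c.support.card = ∑ _x ∈ c.support, 1 := by simp
    _ ≤ ∑ x ∈ c.support, (c x).natAbs := by
        refine Finset.sum_le_sum fun x hx => ?_
        have := Finsupp.mem_support_iff.1 hx
        omega

lemma aux_l1Z_mapDomain {α β : Type} {f : α → β} (hf : Function.Injective f) (c : α →₀ ℤ) :
    l1Z (c.mapDomain f) = l1Z c := by
  unfold l1Z
  exact Finsupp.sum_mapDomain_index_inj (h := fun (_ : β) (v : ℤ) => v.natAbs) hf

/-! ### Boundary maps: linearity -/

lemma aux_d1_add (Γ : CGraph) (a b : Γ.E →₀ ℤ) : Γ.d1 (a + b) = Γ.d1 a + Γ.d1 b :=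
  Finsupp.sum_add_index' (fun _ => zero_smul _ _) (fun _ b₁ b₂ => add_smul b₁ b₂ _)

lemma aux_d1_zero (Γ : CGraph) : Γ.d1 0 = 0 := Finsupp.sum_zero_index

lemma aux_d1_single (Γ : CGraph) (e : Γ.E) (c : ℤ) :
    Γ.d1 (Finsupp.single e c) =
      c • (Finsupp.single (Γ.ends e).2 (1 : ℤ) - Finsupp.single (Γ.ends e).1 1) :=
  Finsupp.sum_single_index (zero_smul _ _)

lemma aux_d1_neg (Γ : CGraph) (a : Γ.E →₀ ℤ) : Γ.d1 (-a) = -Γ.d1 a := by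
  have h := aux_d1_add Γ (-a) a
  rw [neg_add_cancel, aux_d1_zero] at h
  exact eq_neg_of_add_eq_zero_left h.symm

lemma aux_d1_sub (Γ : CGraph) (a b : Γ.E →₀ ℤ) : Γ.d1 (a - b) = Γ.d1 a - Γ.d1 b := by
  rw [sub_eq_add_neg, aux_d1_add, aux_d1_neg, sub_eq_add_neg]

lemma aux_d2_add (X : TwoComplex) (a b : X.F →₀ ℤ) : X.d2 (a + b) = X.d2 a + X.d2 b :=
  Finsupp.sum_add_index' (fun _ => zero_smul _ _) (fun _ b₁ b₂ => add_smul b₁ b₂ _)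

lemma aux_d2_zero (X : TwoComplex) : X.d2 0 = 0 := Finsupp.sum_zero_index

/-! ### pathCycle basics -/

lemma aux_pathCycle_nil (Γ : CGraph) : Γ.pathCycle [] = 0 := rfl

lemma aux_pathCycle_cons (Γ : CGraph) (p : Γ.E × Bool) (t : List (Γ.E × Bool)) :
    Γ.pathCycle (p :: t) =
      Finsupp.single p.1 (if p.2 then (1 : ℤ) else -1) + Γ.pathCycle t := by
  simp [CGraph.pathCycle]

lemma aux_pathCycle_apply_of_not_mem (Γ : CGraph) :
    ∀ (l : List (Γ.E × Bool)) (e : Γ.E), e ∉ l.map Prod.fst → Γ.pathCycle l e = 0 := by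
  classical
  intro l
  induction l with
  | nil => intro e _; simp [aux_pathCycle_nil]
  | cons p t ih =>
    intro e he
    simp only [List.map_cons, List.mem_cons, not_or] at he
    rw [aux_pathCycle_cons, Finsupp.add_apply, ih e he.2,
      Finsupp.single_apply, if_neg (fun h => he.1 h.symm)]
    simp

lemma aux_pathCycle_apply_mem (Γ : CGraph) :
    ∀ (l : List (Γ.E × Bool)), (l.map Prod.fst).Nodup → ∀ p ∈ l,
      Γ.pathCycle l p.1 = if p.2 then (1 : ℤ) else -1 := by
  classical
  intro l
  induction l with
  | nil => intro _ p hp; simp at hp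
  | cons q t ih =>
    intro hnd p hp
    simp only [List.map_cons, List.nodup_cons] at hnd
    rw [aux_pathCycle_cons, Finsupp.add_apply]
    rcases List.mem_cons.1 hp with rfl | hpt
    · rw [aux_pathCycle_apply_of_not_mem Γ t p.1 hnd.1, Finsupp.single_apply, if_pos rfl,
        add_zero]
    · have hne : q.1 ≠ p.1 := fun h => hnd.1 (h ▸ List.mem_map_of_mem (f := Prod.fst) hpt)
      rw [Finsupp.single_apply, if_neg hne, ih hnd.2 p hpt, zero_add]

/-! ### closed path cycles have zero boundary -/

lemma aux_list_map_sum {α : Type} {M : Type} [AddCommMonoid M] (f : α → M) (l : List α) :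
    (l.map f).sum = ∑ i : Fin l.length, f (l.get i) := by
  conv_lhs => rw [← List.ofFn_get l]
  rw [List.map_ofFn, Fin.sum_ofFn]
  rfl

lemma aux_d1_listSum (Γ : CGraph) (L : List (Γ.E →₀ ℤ)) :
    Γ.d1 L.sum = (L.map Γ.d1).sum := by
  induction L with
  | nil => simpa using aux_d1_zero Γ
  | cons a t ih => rw [List.sum_cons, aux_d1_add, ih, List.map_cons, List.sum_cons]

lemma aux_d1_dirSingle (Γ : CGraph) (p : Γ.E × Bool) :
    Γ.d1 (Finsupp.single p.1 (if p.2 then (1 : ℤ) else -1)) =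
      Finsupp.single (Γ.tgt p) 1 - Finsupp.single (Γ.src p) 1 := by
  obtain ⟨e, b⟩ := p
  cases b <;> rw [aux_d1_single] <;> simp [CGraph.src, CGraph.tgt, neg_sub]

lemma aux_d1_pathCycle (Γ : CGraph) (l : List (Γ.E × Bool)) (hl : Γ.IsClosedPath l) :
    Γ.d1 (Γ.pathCycle l) = 0 := by
  classical
  rw [CGraph.pathCycle, aux_d1_listSum, List.map_map]
  have h1 : (l.map (Γ.d1 ∘ fun p => Finsupp.single p.1 (if p.2 then (1 : ℤ) else -1))) =
      l.map (fun p => Finsupp.single (Γ.tgt p) (1 : ℤ) - Finsupp.single (Γ.src p) 1) := by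
    apply List.map_congr_left
    intro p _
    exact aux_d1_dirSingle Γ p
  rw [h1, aux_list_map_sum, Finset.sum_sub_distrib]
  have hn : 0 < l.length := by
    cases l with
    | nil => exact absurd rfl hl.1
    | cons a t => simp
  have hbij : Function.Bijective
      (fun i : Fin l.length => (⟨((i : ℕ) + 1) % l.length, Nat.mod_lt _ hn⟩ : Fin l.length)) := by
    rw [Fintype.bijective_iff_injective_and_card]
    refine ⟨fun a b hab => ?_, rfl⟩
    simp only [Fin.mk.injEq] at hab
    have ha := a.isLt
    have hb := b.isLt
    apply Fin.ext
    rcases Nat.lt_or_ge ((a : ℕ) + 1) l.length with h1' | h1' <;>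
      rcases Nat.lt_or_ge ((b : ℕ) + 1) l.length with h2' | h2'
    · rw [Nat.mod_eq_of_lt h1', Nat.mod_eq_of_lt h2'] at hab; omega
    · have hb1 : (b : ℕ) + 1 = l.length := by omega
      rw [Nat.mod_eq_of_lt h1', hb1, Nat.mod_self] at hab; omega
    · have ha1 : (a : ℕ) + 1 = l.length := by omega
      rw [Nat.mod_eq_of_lt h2', ha1, Nat.mod_self] at hab; omega
    · omega
  have hsum : ∑ i : Fin l.length, Finsupp.single (Γ.tgt (l.get i)) (1 : ℤ) =
      ∑ i : Fin l.length, Finsupp.single (Γ.src (l.get i)) (1 : ℤ) := by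
    refine Fintype.sum_bijective _ hbij _ _ fun i => ?_
    rw [hl.2 i]
  rw [hsum, sub_self]

/-! ### the flow lemma and circuit extraction -/

lemma aux_exists_out (Γ : CGraph) (γ : Γ.E →₀ ℤ) (hγ : Γ.IsCycle γ)
    (p : Γ.E × Bool) (hp : 0 < (if p.2 then γ p.1 else -γ p.1)) :
    ∃ q : Γ.E × Bool, 0 < (if q.2 then γ q.1 else -γ q.1) ∧ Γ.src q = Γ.tgt p := by
  classical
  by_contra hcon
  push_neg at hcon
  have hsign : ∀ e : Γ.E,
      ((Γ.ends e).1 = Γ.tgt p → γ e ≤ 0) ∧ ((Γ.ends e).2 = Γ.tgt p → 0 ≤ γ e) := by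
    intro e
    constructor
    · intro h1
      by_contra hgt
      push_neg at hgt
      exact hcon (e, true) (by simpa using hgt) (by simpa [CGraph.src] using h1)
    · intro h2
      by_contra hlt
      push_neg at hlt
      refine hcon (e, false) ?_ (by simpa [CGraph.src] using h2)
      simpa using hlt
  have hz : (Γ.d1 γ) (Γ.tgt p) = 0 := by rw [hγ]; rfl
  rw [CGraph.d1, Finsupp.sum_apply] at hz
  have hz' : ∑ e ∈ γ.support, γ e * ((if (Γ.ends e).2 = Γ.tgt p then (1 : ℤ) else 0) -
      (if (Γ.ends e).1 = Γ.tgt p then (1 : ℤ) else 0)) = 0 := by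
    refine Eq.trans ?_ hz
    rw [Finsupp.sum]
    refine Finset.sum_congr rfl fun e _ => ?_
    rw [Finsupp.smul_apply, Finsupp.sub_apply, Finsupp.single_apply, Finsupp.single_apply,
      smul_eq_mul]
  have hterm : ∀ e ∈ γ.support,
      0 ≤ γ e * ((if (Γ.ends e).2 = Γ.tgt p then (1 : ℤ) else 0) -
        (if (Γ.ends e).1 = Γ.tgt p then (1 : ℤ) else 0)) := by
    intro e _
    rcases hsign e with ⟨h1, h2⟩
    by_cases hA : (Γ.ends e).2 = Γ.tgt p <;> by_cases hB : (Γ.ends e).1 = Γ.tgt p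
    · rw [if_pos hA, if_pos hB, sub_self, mul_zero]
    · rw [if_pos hA, if_neg hB, sub_zero, mul_one]; exact h2 hA
    · rw [if_neg hA, if_pos hB, zero_sub, mul_neg, mul_one]
      have := h1 hB
      omega
    · rw [if_neg hA, if_neg hB, sub_self, mul_zero]
  have hmem : p.1 ∈ γ.support := by
    rcases Bool.eq_false_or_eq_true p.2 with hb | hb <;> rw [hb] at hp <;> simp at hp <;>
      exact Finsupp.mem_support_iff.2 (by omega)
  have hpos : 0 < γ p.1 * ((if (Γ.ends p.1).2 = Γ.tgt p then (1 : ℤ) else 0) -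
      (if (Γ.ends p.1).1 = Γ.tgt p then (1 : ℤ) else 0)) := by
    rcases hsign p.1 with ⟨h1, h2⟩
    rcases Bool.eq_false_or_eq_true p.2 with hb | hb <;> rw [hb] at hp <;> simp at hp
    · -- p.2 = true : tgt = ends.2
      have hA : (Γ.ends p.1).2 = Γ.tgt p := by simp [CGraph.tgt, hb]
      have hB : (Γ.ends p.1).1 ≠ Γ.tgt p := fun h => by have := h1 h; omega
      rw [if_pos hA, if_neg hB, sub_zero, mul_one]
      exact hp
    · -- p.2 = false : tgt = ends.1
      have hA : (Γ.ends p.1).1 = Γ.tgt p := by simp [CGraph.tgt, hb]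
      have hB : (Γ.ends p.1).2 ≠ Γ.tgt p := fun h => by have := h2 h; omega
      rw [if_pos hA, if_neg hB, zero_sub, mul_neg, mul_one]
      omega
  have hlt : (0 : ℤ) < ∑ e ∈ γ.support,
      γ e * ((if (Γ.ends e).2 = Γ.tgt p then (1 : ℤ) else 0) -
        (if (Γ.ends e).1 = Γ.tgt p then (1 : ℤ) else 0)) :=
    Finset.sum_pos' hterm ⟨p.1, hmem, hpos⟩
  omega

lemma aux_exists_circuit (Γ : CGraph) (γ : Γ.E →₀ ℤ) (hγ : Γ.IsCycle γ) (hne : γ ≠ 0) :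
    ∃ l : List (Γ.E × Bool), Γ.IsCircuit l ∧
      ∀ p ∈ l, 0 < (if p.2 then γ p.1 else -γ p.1) := by
  classical
  -- starting directed edge
  have h0 : ∃ p : Γ.E × Bool, 0 < (if p.2 then γ p.1 else -γ p.1) := by
    obtain ⟨e, he⟩ : ∃ e, γ e ≠ 0 := by
      by_contra h
      push_neg at h
      exact hne (Finsupp.ext h)
    rcases lt_or_gt_of_ne he with h | h
    · exact ⟨(e, false), by simpa using h⟩
    · exact ⟨(e, true), by simpa using h⟩
  obtain ⟨p₀, hp₀⟩ := h0
  choose nxt hnxt1 hnxt2 using fun (p : Γ.E × Bool) (hp : 0 < (if p.2 then γ p.1 else -γ p.1)) =>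
    aux_exists_out Γ γ hγ p hp
  let w : ℕ → {p : Γ.E × Bool // 0 < (if p.2 then γ p.1 else -γ p.1)} := fun n =>
    Nat.rec ⟨p₀, hp₀⟩ (fun _ q => ⟨nxt q.1 q.2, hnxt1 q.1 q.2⟩) n
  have hw : ∀ n, Γ.src (w (n + 1)).1 = Γ.tgt (w n).1 := fun n => hnxt2 (w n).1 (w n).2
  -- all sources lie in a finite set of vertices
  have hsupp : ∀ n, (w n).1.1 ∈ γ.support := by
    intro n
    have h := (w n).2
    rcases Bool.eq_false_or_eq_true (w n).1.2 with hb | hb <;> rw [hb] at h <;>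
      simp at h <;>
      exact Finsupp.mem_support_iff.2 (by omega)
  let Vt : Finset Γ.V := γ.support.image (fun e => (Γ.ends e).1) ∪
    γ.support.image (fun e => (Γ.ends e).2)
  have hmemV : ∀ n, Γ.src (w n).1 ∈ Vt := by
    intro n
    rcases Bool.eq_false_or_eq_true (w n).1.2 with hb | hb
    · have : Γ.src (w n).1 = (Γ.ends (w n).1.1).1 := by simp [CGraph.src, hb]
      rw [this]
      exact Finset.mem_union_left _ (Finset.mem_image_of_mem _ (hsupp n))
    · have : Γ.src (w n).1 = (Γ.ends (w n).1.1).2 := by simp [CGraph.src, hb]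
      rw [this]
      exact Finset.mem_union_right _ (Finset.mem_image_of_mem _ (hsupp n))
  -- pigeonhole
  have hrep : ∃ a b : ℕ, a < b ∧ Γ.src (w a).1 = Γ.src (w b).1 := by
    obtain ⟨a, ha, b, hb, hab, heq⟩ :=
      Finset.exists_ne_map_eq_of_card_lt_of_maps_to
        (s := Finset.range (Vt.card + 1)) (t := Vt)
        (by simp) (fun n _ => hmemV n)
    rcases Nat.lt_or_ge a b with h | h
    · exact ⟨a, b, h, heq⟩
    · have : b < a := by
        rcases Nat.lt_or_ge b a with h' | h'
        · exact h'
        · omega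
      exact ⟨b, a, this, heq.symm⟩
  have hex : ∃ j, 0 < j ∧ ∃ i, i < j ∧ Γ.src (w i).1 = Γ.src (w j).1 := by
    obtain ⟨a, b, hab, heq⟩ := hrep
    exact ⟨b, by omega, a, hab, heq⟩
  let j := Nat.find hex
  have hjspec := Nat.find_spec hex
  obtain ⟨hjpos, i, hij, hsrc⟩ := hjspec
  have hjmin : ∀ j' < j, ¬(0 < j' ∧ ∃ i', i' < j' ∧ Γ.src (w i').1 = Γ.src (w j').1) :=
    fun j' hj' => Nat.find_min hex hj'
  set n := j - i with hn
  have hnpos : 0 < n := by omega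
  have hij' : i + n = j := by omega
  -- the circuit
  let l : List (Γ.E × Bool) := (List.range n).map (fun t => (w (i + t)).1)
  have hlen : l.length = n := by simp [l]
  have hget : ∀ m : Fin l.length, l.get m = (w (i + (m : ℕ))).1 := by
    intro m
    simp [l, List.getElem_map]
  -- injectivity of sources along the segment
  have hinj : ∀ t, t < n → ∀ t', t' < n →
      Γ.src (w (i + t)).1 = Γ.src (w (i + t')).1 → t = t' := by
    intro t ht t' ht' heq
    rcases lt_trichotomy t t' with h | h | h
    · exfalso
      refine hjmin (i + t') (by omega) ⟨by omega, i + t, by omega, heq⟩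
    · exact h
    · exfalso
      refine hjmin (i + t) (by omega) ⟨by omega, i + t', by omega, heq.symm⟩
  -- closed path
  have hclosed : Γ.IsClosedPath l := by
    refine ⟨?_, ?_⟩
    · intro h
      rw [← List.length_eq_zero_iff] at h
      omega
    · intro m
      rw [hget, hget]
      show Γ.tgt (w (i + (m : ℕ))).1 = Γ.src (w (i + ((m : ℕ) + 1) % l.length)).1
      by_cases hm2 : (m : ℕ) + 1 < l.length
      · rw [Nat.mod_eq_of_lt hm2, show i + ((m : ℕ) + 1) = (i + (m : ℕ)) + 1 from by omega, hw]
      · have hml : (m : ℕ) + 1 = l.length := by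
          have := m.isLt
          omega
        rw [hml, Nat.mod_self, Nat.add_zero]
        have h1 : i + (m : ℕ) = j - 1 := by
          have := m.isLt
          omega
        rw [h1, hsrc]
        have h3 := hw (j - 1)
        rw [show (j - 1) + 1 = j from by omega] at h3
        exact h3.symm
  -- nodup sources
  have hndsrc : (l.map Γ.src).Nodup := by
    have : l.map Γ.src = (List.range n).map (fun t => Γ.src (w (i + t)).1) := by
      simp [l, List.map_map]
    rw [this]
    refine List.Nodup.map_on ?_ List.nodup_range
    intro t ht t' ht' heq
    exact hinj t (List.mem_range.1 ht) t' (List.mem_range.1 ht') heq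
  -- nodup edges
  have hnded : (l.map Prod.fst).Nodup := by
    have : l.map Prod.fst = (List.range n).map (fun t => (w (i + t)).1.1) := by
      simp [l, List.map_map]
    rw [this]
    refine List.Nodup.map_on ?_ List.nodup_range
    intro t ht t' ht' heq
    rw [List.mem_range] at ht ht'
    by_cases hbb : (w (i + t)).1.2 = (w (i + t')).1.2
    · have hpe : (w (i + t)).1 = (w (i + t')).1 := Prod.ext heq hbb
      exact hinj t ht t' ht' (by rw [hpe])
    · exfalso
      have h1 := (w (i + t)).2
      have h2 := (w (i + t')).2
      rw [← heq] at h2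
      rcases Bool.eq_false_or_eq_true (w (i + t)).1.2 with hb | hb <;>
        rcases Bool.eq_false_or_eq_true (w (i + t')).1.2 with hb' | hb'
      · exact hbb (hb.trans hb'.symm)
      · rw [hb] at h1; rw [hb'] at h2; simp at h1 h2; omega
      · rw [hb] at h1; rw [hb'] at h2; simp at h1 h2; omega
      · exact hbb (hb.trans hb'.symm)
  refine ⟨l, ⟨hclosed, hnded, hndsrc⟩, ?_⟩
  intro p hp
  simp only [l, List.mem_map, List.mem_range] at hp
  obtain ⟨t, _, rfl⟩ := hp
  exact (w (i + t)).2

/-! ### subtracting a sign-compatible circuit decreases the norm exactly -/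

lemma aux_l1Z_sub_pathCycle (Γ : CGraph) (γ : Γ.E →₀ ℤ) (l : List (Γ.E × Bool))
    (hnd : (l.map Prod.fst).Nodup)
    (hpos : ∀ p ∈ l, 0 < (if p.2 then γ p.1 else -γ p.1)) :
    l1Z (γ - Γ.pathCycle l) + l.length = l1Z γ := by
  classical
  set δ := Γ.pathCycle l with hδ
  set S := γ.support with hS
  -- edges of l are in the support of γ
  have hedges : ∀ e ∈ l.map Prod.fst, e ∈ S := by
    intro e he
    obtain ⟨p, hpl, rfl⟩ := List.mem_map.1 he
    have := hpos p hpl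
    rcases Bool.eq_false_or_eq_true p.2 with hb | hb <;> rw [hb] at this <;>
      simp at this <;>
      exact Finsupp.mem_support_iff.2 (by omega)
  -- coefficients of δ
  have hdelta : ∀ e : Γ.E, δ e = 0 ∨ (δ e = 1 ∧ 0 < γ e) ∨ (δ e = -1 ∧ γ e < 0) := by
    intro e
    by_cases he : e ∈ l.map Prod.fst
    · obtain ⟨p, hpl, rfl⟩ := List.mem_map.1 he
      have hval := aux_pathCycle_apply_mem Γ l hnd p hpl
      have hsgn := hpos p hpl
      rcases Bool.eq_false_or_eq_true p.2 with hb | hb <;> rw [hb] at hval hsgn <;>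
        simp at hval hsgn
      · exact Or.inr (Or.inl ⟨hval, hsgn⟩)
      · exact Or.inr (Or.inr ⟨hval, by omega⟩)
    · exact Or.inl (aux_pathCycle_apply_of_not_mem Γ l e he)
  have hsuppδ : δ.support ⊆ S := by
    intro e he
    rw [Finsupp.mem_support_iff] at he
    rcases hdelta e with h | h | h
    · exact absurd h he
    · exact Finsupp.mem_support_iff.2 (by omega)
    · exact Finsupp.mem_support_iff.2 (by omega)
  have hsuppsub : (γ - δ).support ⊆ S := by
    intro e he
    rw [Finsupp.mem_support_iff, Finsupp.sub_apply] at he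
    by_contra hx
    have h1 : γ e = 0 := by
      by_contra h
      exact hx (Finsupp.mem_support_iff.2 h)
    have h2 : δ e = 0 := by
      by_contra h
      exact hx (hsuppδ (Finsupp.mem_support_iff.2 h))
    rw [h1, h2] at he
    exact he (by ring)
  -- count of the circuit edges
  have hδcount : ∑ e ∈ S, (δ e).natAbs = l.length := by
    have hstep : ∀ e ∈ S, (δ e).natAbs = if e ∈ l.map Prod.fst then 1 else 0 := by
      intro e _
      by_cases he : e ∈ l.map Prod.fst
      · obtain ⟨p, hpl, rfl⟩ := List.mem_map.1 he
        have hval := aux_pathCycle_apply_mem Γ l hnd p hpl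
        rw [if_pos he]
        rcases Bool.eq_false_or_eq_true p.2 with hb | hb <;> rw [hb] at hval <;>
          simp at hval <;> rw [hval] <;> rfl
      · rw [if_neg he, aux_pathCycle_apply_of_not_mem Γ l e he]
        rfl
    rw [Finset.sum_congr rfl hstep]
    simp only [← List.mem_toFinset]
    rw [Finset.sum_ite_mem]
    have hfilter : S ∩ (l.map Prod.fst).toFinset = (l.map Prod.fst).toFinset := by
      refine Finset.inter_eq_right.2 ?_
      intro e he
      exact hedges e (List.mem_toFinset.1 he)
    rw [hfilter, Finset.sum_const, smul_eq_mul, mul_one, List.toFinset_card_of_nodup hnd,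
      List.length_map]
  calc l1Z (γ - δ) + l.length
      = ∑ e ∈ S, ((γ - δ) e).natAbs + ∑ e ∈ S, (δ e).natAbs := by
        rw [aux_l1Z_eq_sum (γ - δ) S hsuppsub, hδcount]
    _ = ∑ e ∈ S, (((γ - δ) e).natAbs + (δ e).natAbs) := (Finset.sum_add_distrib).symm
    _ = ∑ e ∈ S, (γ e).natAbs := by
        refine Finset.sum_congr rfl fun e _ => ?_
        rw [Finsupp.sub_apply]
        rcases hdelta e with h | ⟨h1, h2⟩ | ⟨h1, h2⟩ <;> omega
    _ = l1Z γ := (aux_l1Z_eq_sum γ S le_rfl).symm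

lemma aux_length_le_l1Z (Γ : CGraph) (γ : Γ.E →₀ ℤ) (l : List (Γ.E × Bool))
    (hnd : (l.map Prod.fst).Nodup)
    (hpos : ∀ p ∈ l, 0 < (if p.2 then γ p.1 else -γ p.1)) :
    l.length ≤ l1Z γ := by
  classical
  have hedges : ∀ e ∈ l.map Prod.fst, e ∈ γ.support := by
    intro e he
    obtain ⟨p, hpl, rfl⟩ := List.mem_map.1 he
    have := hpos p hpl
    rcases Bool.eq_false_or_eq_true p.2 with hb | hb <;> rw [hb] at this <;>
      simp at this <;>
      exact Finsupp.mem_support_iff.2 (by omega)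
  calc l.length = (l.map Prod.fst).length := (List.length_map _).symm
    _ = (l.map Prod.fst).toFinset.card := (List.toFinset_card_of_nodup hnd).symm
    _ ≤ γ.support.card := Finset.card_le_card (fun e he => hedges e (List.mem_toFinset.1 he))
    _ ≤ l1Z γ := aux_card_support_le_l1Z γ

/-! ### equivariance -/

section Equivariance

variable {G : Type} [Group G] {X : TwoComplex} (A : ComplexAction G X)

lemma aux_eMap_one (e : X.E) : A.eMap 1 e = e := by
  have h := A.eMap_mul 1 1 e
  rw [one_mul] at h
  exact (A.eMap 1).injective h.symm

lemma aux_eMap_inv (g : G) (e : X.E) : A.eMap g⁻¹ (A.eMap g e) = e := by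
  rw [← A.eMap_mul, inv_mul_cancel, aux_eMap_one]

lemma aux_fMap_one (f : X.F) : A.fMap 1 f = f := by
  have h := A.fMap_mul 1 1 f
  rw [one_mul] at h
  exact (A.fMap 1).injective h.symm

lemma aux_fMap_inv (g : G) (f : X.F) : A.fMap g⁻¹ (A.fMap g f) = f := by
  rw [← A.fMap_mul, inv_mul_cancel, aux_fMap_one]

lemma aux_src_shift (g : G) (p : X.E × Bool) :
    X.toCGraph.src (A.eMap g p.1, p.2) = A.vMap g (X.toCGraph.src p) := by
  obtain ⟨e, b⟩ := p
  cases b <;> simp [CGraph.src, A.ends_eq]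

lemma aux_tgt_shift (g : G) (p : X.E × Bool) :
    X.toCGraph.tgt (A.eMap g p.1, p.2) = A.vMap g (X.toCGraph.tgt p) := by
  obtain ⟨e, b⟩ := p
  cases b <;> simp [CGraph.tgt, A.ends_eq]

lemma aux_isCircuit_shift (g : G) (l : List (X.E × Bool)) (hl : X.toCGraph.IsCircuit l) :
    X.toCGraph.IsCircuit (l.map fun p => (A.eMap g p.1, p.2)) := by
  obtain ⟨⟨hne, hcp⟩, hnded, hndsrc⟩ := hl
  set l' : List (X.E × Bool) := l.map fun p => (A.eMap g p.1, p.2) with hl'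
  have hlen : l'.length = l.length := List.length_map _
  have hget : ∀ m : Fin l'.length, l'.get m = (A.eMap g (l.get (Fin.cast hlen m)).1,
      (l.get (Fin.cast hlen m)).2) := by
    intro m
    simp [l', List.getElem_map]
  refine ⟨⟨fun h => hne (by simpa [l'] using h), fun m => ?_⟩, ?_, ?_⟩
  · rw [hget, hget, aux_src_shift, aux_tgt_shift]
    congr 1
    have := hcp (Fin.cast hlen m)
    convert this using 3 <;> simp [hlen]
  · have : l'.map Prod.fst = (l.map Prod.fst).map (A.eMap g) := by
      simp [l', List.map_map]
    rw [this]
    exact hnded.map ((A.eMap g).injective)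
  · have : l'.map X.toCGraph.src = (l.map X.toCGraph.src).map (A.vMap g) := by
      simp only [l', List.map_map]
      apply List.map_congr_left
      intro p _
      exact aux_src_shift A g p
    rw [this]
    exact hndsrc.map ((A.vMap g).injective)

lemma aux_pathCycle_shift (g : G) (l : List (X.E × Bool)) :
    X.toCGraph.pathCycle (l.map fun p => (A.eMap g p.1, p.2)) =
      Finsupp.mapDomain (A.eMap g) (X.toCGraph.pathCycle l) := by
  induction l with
  | nil => simp [aux_pathCycle_nil, Finsupp.mapDomain_zero]
  | cons p t ih =>
    rw [List.map_cons, aux_pathCycle_cons, aux_pathCycle_cons, Finsupp.mapDomain_add,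
      Finsupp.mapDomain_single, ih]

lemma aux_d2_shift (g : G) (μ : X.F →₀ ℤ) :
    X.d2 (Finsupp.mapDomain (A.fMap g) μ) = Finsupp.mapDomain (A.eMap g) (X.d2 μ) := by
  rw [TwoComplex.d2, TwoComplex.d2,
    Finsupp.sum_mapDomain_index_inj (h := fun f c => c • X.fb f) (A.fMap g).injective]
  refine Eq.trans (Finsupp.sum_congr fun f _ => ?_)
    (map_finsuppSum (Finsupp.mapDomain.addMonoidHom ⇑(A.eMap g)) μ
      (fun f c => c • X.fb f)).symm
  rw [A.fb_eq]
  simp [Finsupp.mapDomain_smul]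

end Equivariance

end AuxProofs

/-- A cocompact G-complex with trivial first homology over ℤ, fine
1-skeleton, and finite stabilizers of 1-cells has finite-valued homological Dehn
function over ℤ. -/
theorem FV_finite_of_fine (G : Type) [Group G] (X : TwoComplex)
    (hbd : ∀ f : X.F, X.toCGraph.d1 (X.fb f) = 0)
    (A : ComplexAction G X) (hcc : A.Cocompact)
    (hstab : ∀ e : X.E, {g : G | A.eMap g e = e}.Finite)
    (hH1 : ∀ γ : X.E →₀ ℤ, X.toCGraph.IsCycle γ → ∃ μ : X.F →₀ ℤ, X.d2 μ = γ)
    (hfine : X.toCGraph.Fine) :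
    ∀ k : ℕ, X.FV k < ⊤ := by
  classical
  intro k
  obtain ⟨-, ⟨s, hsfin, hs⟩, -⟩ := hcc
  -- the finite set of base circuits
  set T : Set (List (X.E × Bool)) :=
    {l | X.toCGraph.IsCircuit l ∧ l.length ≤ k ∧ ∃ e ∈ s, e ∈ l.map Prod.fst} with hT
  have hTfin : T.Finite := by
    have hsub : T ⊆ ⋃ e ∈ s,
        {l | X.toCGraph.IsCircuit l ∧ e ∈ l.map Prod.fst ∧ l.length ≤ k} := by
      rintro l ⟨h1, h2, e, hes, hel⟩
      exact Set.mem_biUnion hes ⟨h1, hel, h2⟩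
    exact Set.Finite.subset (Set.Finite.biUnion hsfin fun e _ => hfine e k) hsub
  -- choose fillings for the base circuits
  have hfillT : ∀ l : List (X.E × Bool), X.toCGraph.IsClosedPath l →
      ∃ μ : X.F →₀ ℤ, X.d2 μ = X.toCGraph.pathCycle l :=
    fun l hl => hH1 _ (aux_d1_pathCycle X.toCGraph l hl)
  let fill : List (X.E × Bool) → (X.F →₀ ℤ) := fun l =>
    if h : X.toCGraph.IsClosedPath l then Classical.choose (hfillT l h) else 0
  have hfill : ∀ l, X.toCGraph.IsClosedPath l → X.d2 (fill l) = X.toCGraph.pathCycle l := by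
    intro l h
    simp only [fill, dif_pos h]
    exact Classical.choose_spec (hfillT l h)
  set N : ℕ := hTfin.toFinset.sup (fun l => l1Z (fill l)) with hN
  have hNle : ∀ l ∈ T, l1Z (fill l) ≤ N := by
    intro l hl
    rw [hN]
    exact Finset.le_sup (f := fun l => l1Z (fill l)) (hTfin.mem_toFinset.2 hl)
  -- every circuit of length ≤ k has a filling of size ≤ N
  have hcirc : ∀ l : List (X.E × Bool), X.toCGraph.IsCircuit l → l.length ≤ k →
      ∃ μ : X.F →₀ ℤ, X.d2 μ = X.toCGraph.pathCycle l ∧ l1Z μ ≤ N := by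
    intro l hl hlk
    obtain ⟨p, hp⟩ : ∃ p, p ∈ l := by
      cases l with
      | nil => exact absurd rfl hl.1.1
      | cons a t => exact ⟨a, List.mem_cons_self⟩
    obtain ⟨g, hg⟩ := hs p.1
    have hl'T : (l.map fun q => (A.eMap g q.1, q.2)) ∈ T := by
      refine ⟨aux_isCircuit_shift A g l hl, ?_, A.eMap g p.1, hg, ?_⟩
      · rw [List.length_map]
        exact hlk
      · exact List.mem_map.2 ⟨(A.eMap g p.1, p.2), List.mem_map.2 ⟨p, hp, rfl⟩, rfl⟩
    have hfill' : X.d2 (fill (l.map fun q => (A.eMap g q.1, q.2))) =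
        X.toCGraph.pathCycle (l.map fun q => (A.eMap g q.1, q.2)) :=
      hfill _ (aux_isCircuit_shift A g l hl).1
    refine ⟨Finsupp.mapDomain (A.fMap g⁻¹) (fill (l.map fun q => (A.eMap g q.1, q.2))), ?_, ?_⟩
    · rw [aux_d2_shift A g⁻¹, hfill', aux_pathCycle_shift A g, ← Finsupp.mapDomain_comp]
      have hcomp : (⇑(A.eMap g⁻¹) ∘ ⇑(A.eMap g)) = id := funext fun e => aux_eMap_inv A g e
      rw [hcomp, Finsupp.mapDomain_id]
    · rw [aux_l1Z_mapDomain (A.fMap g⁻¹).injective]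
      exact hNle _ hl'T
  -- main induction: every cycle of norm ≤ k has a filling of size ≤ l1Z γ * N
  have hmain : ∀ n : ℕ, ∀ γ : X.E →₀ ℤ, X.toCGraph.IsCycle γ → l1Z γ ≤ k → l1Z γ ≤ n →
      ∃ μ : X.F →₀ ℤ, X.d2 μ = γ ∧ l1Z μ ≤ l1Z γ * N := by
    intro n
    induction n with
    | zero =>
      intro γ _ _ h0
      have hγ0 : γ = 0 := aux_eq_zero_of_l1Z (Nat.le_zero.1 h0)
      exact ⟨0, by rw [hγ0]; exact aux_d2_zero X, by rw [aux_l1Z_zero]; exact Nat.zero_le _⟩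
    | succ n ih =>
      intro γ hcyc hk hn
      by_cases h0 : γ = 0
      · exact ⟨0, by rw [h0]; exact aux_d2_zero X, by rw [aux_l1Z_zero]; exact Nat.zero_le _⟩
      · obtain ⟨l, hlcirc, hlpos⟩ := aux_exists_circuit X.toCGraph γ hcyc h0
        have hnd : (l.map Prod.fst).Nodup := hlcirc.2.1
        have hlen_le : l.length ≤ l1Z γ := aux_length_le_l1Z X.toCGraph γ l hnd hlpos
        have hlen_pos : 0 < l.length := by
          cases hlist : l with
          | nil => exact absurd hlist hlcirc.1.1
          | cons a t => simp
        have hsub := aux_l1Z_sub_pathCycle X.toCGraph γ l hnd hlpos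
        obtain ⟨μ₁, hμ₁d, hμ₁n⟩ := hcirc l hlcirc (le_trans hlen_le hk)
        have hcyc' : X.toCGraph.IsCycle (γ - X.toCGraph.pathCycle l) := by
          have h1 : X.toCGraph.d1 γ = 0 := hcyc
          have h2 : X.toCGraph.d1 (X.toCGraph.pathCycle l) = 0 :=
            aux_d1_pathCycle _ l hlcirc.1
          show X.toCGraph.d1 _ = 0
          rw [aux_d1_sub, h1, h2, sub_zero]
        obtain ⟨μ₂, hμ₂d, hμ₂n⟩ := ih (γ - X.toCGraph.pathCycle l) hcyc' (by omega) (by omega)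
        refine ⟨μ₁ + μ₂, ?_, ?_⟩
        · rw [aux_d2_add, hμ₁d, hμ₂d]
          abel
        · calc l1Z (μ₁ + μ₂) ≤ l1Z μ₁ + l1Z μ₂ := aux_l1Z_add_le _ _
            _ ≤ N + l1Z (γ - X.toCGraph.pathCycle l) * N := add_le_add hμ₁n hμ₂n
            _ = (l1Z (γ - X.toCGraph.pathCycle l) + 1) * N := by ring
            _ ≤ l1Z γ * N := Nat.mul_le_mul_right N (by omega)
  -- conclude
  have hbound : X.FV k ≤ ((k * N : ℕ) : ℕ∞) := by
    rw [TwoComplex.FV]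
    refine iSup₂_le fun γ hγ => ?_
    obtain ⟨hcyc, hk⟩ := hγ
    obtain ⟨μ, hμd, hμn⟩ := hmain (l1Z γ) γ hcyc hk le_rfl
    have h1 : X.fillNorm γ ≤ ((l1Z μ : ℕ) : ℕ∞) := by
      rw [TwoComplex.fillNorm]
      exact iInf₂_le μ hμd
    refine le_trans h1 ?_
    have h2 : l1Z μ ≤ k * N := le_trans hμn (Nat.mul_le_mul_right N hk)
    exact_mod_cast h2
  exact lt_of_le_of_lt hbound (WithTop.coe_lt_top _)
end

section
/- Let X be a simply-connected cell complex admitting an isoperimetric function f : ℕ → ℕ (every closed edge path P bounds a van Kampen diagram of area at most f(|P|)). Then FV_{X,ℤ}(n) ≤ f̄(n) for every n, where f̄ is the superadditive closure of f. -/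
open Finsupp

/-- The superadditive closure of `g`: the maximum of `g n₁ + ⋯ + g n_k` over all
partitions `n₁ + ⋯ + n_k = n` into positive parts. -/
noncomputable def superadditiveClosure (g : ℕ → ℕ) (n : ℕ) : ℕ :=
  sSup {m : ℕ | ∃ l : List ℕ, (∀ x ∈ l, 0 < x) ∧ l.sum = n ∧ (l.map g).sum = m}


section FVHelpers

open Finsupp

variable {α : Type}

lemma l1Z_eq_sum (c : α →₀ ℤ) {s : Finset α} (h : c.support ⊆ s) :
    l1Z c = ∑ e ∈ s, (c e).natAbs :=
  Finsupp.sum_of_support_subset c h _ (by simp)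

lemma l1Z_zero : l1Z (0 : α →₀ ℤ) = 0 := by simp [l1Z]

lemma l1Z_eq_zero {c : α →₀ ℤ} (h : l1Z c = 0) : c = 0 := by
  classical
  ext e
  simp only [Finsupp.coe_zero, Pi.zero_apply]
  rcases eq_or_ne (c e) 0 with h0 | h0
  · exact h0
  · exfalso
    have hmem : e ∈ c.support := Finsupp.mem_support_iff.mpr h0
    rw [l1Z_eq_sum c (Finset.Subset.refl _)] at h
    have h2 := Finset.sum_eq_zero_iff.mp h e hmem
    omega

lemma l1Z_sub_add {a b : α →₀ ℤ}
    (h : ∀ e, (a e - b e).natAbs + (b e).natAbs = (a e).natAbs) :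
    l1Z (a - b) + l1Z b = l1Z a := by
  classical
  have hsub : (a - b).support ⊆ a.support ∪ b.support := Finsupp.support_sub
  rw [l1Z_eq_sum (a - b) hsub, l1Z_eq_sum b Finset.subset_union_right,
    l1Z_eq_sum a Finset.subset_union_left, ← Finset.sum_add_distrib]
  refine Finset.sum_congr rfl fun e _ => ?_
  simpa [Finsupp.sub_apply] using h e

lemma l1Z_add_le (a b : α →₀ ℤ) : l1Z (a + b) ≤ l1Z a + l1Z b := by
  classical
  have hadd : (a + b).support ⊆ a.support ∪ b.support := Finsupp.support_add
  rw [l1Z_eq_sum (a + b) hadd, l1Z_eq_sum a Finset.subset_union_left,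
    l1Z_eq_sum b Finset.subset_union_right, ← Finset.sum_add_distrib]
  refine Finset.sum_le_sum fun e _ => ?_
  simp only [Finsupp.add_apply]
  omega

end FVHelpers

namespace CGraph

variable {Γ : CGraph}

lemma pathCycle_nil : Γ.pathCycle [] = 0 := rfl

lemma pathCycle_cons (p : Γ.E × Bool) (l : List (Γ.E × Bool)) :
    Γ.pathCycle (p :: l) =
      Finsupp.single p.1 (if p.2 then (1 : ℤ) else -1) + Γ.pathCycle l := by
  simp [CGraph.pathCycle]

lemma d1_zero : Γ.d1 0 = 0 := by simp [CGraph.d1]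

lemma d1_add (a b : Γ.E →₀ ℤ) : Γ.d1 (a + b) = Γ.d1 a + Γ.d1 b :=
  Finsupp.sum_add_index' (by simp) (fun e c1 c2 => add_smul c1 c2 _)

lemma d1_sub (a b : Γ.E →₀ ℤ) : Γ.d1 (a - b) = Γ.d1 a - Γ.d1 b := by
  have h := d1_add (a - b) b
  rw [sub_add_cancel] at h
  rw [h]; abel

lemma d1_single (e : Γ.E) (c : ℤ) :
    Γ.d1 (Finsupp.single e c) =
      c • (Finsupp.single (Γ.ends e).2 (1 : ℤ) - Finsupp.single (Γ.ends e).1 1) :=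
  Finsupp.sum_single_index (by simp)

lemma d1_pathCycle_of_walk :
    ∀ (l : List (Γ.E × Bool)) (u v : Γ.V), Γ.IsWalk l u v →
      Γ.d1 (Γ.pathCycle l) = Finsupp.single v 1 - Finsupp.single u 1
  | [], u, v, h => by
      have : u = v := h
      subst this
      simp [pathCycle_nil, d1_zero]
  | p :: l, u, v, h => by
      obtain ⟨hsrc, hw⟩ := h
      rw [pathCycle_cons, d1_add, d1_single, d1_pathCycle_of_walk l _ v hw]
      subst hsrc
      rcases p with ⟨e, b⟩
      cases b <;> simp [CGraph.src, CGraph.tgt] <;> abel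

/-- A directed edge is compatible with a chain if it traverses an edge in the
direction of the sign of its coefficient. -/
def GComp (Γ : CGraph) (γ : Γ.E →₀ ℤ) (p : Γ.E × Bool) : Prop :=
  if p.2 then 0 < γ p.1 else γ p.1 < 0

lemma GComp.mem_support {γ : Γ.E →₀ ℤ} {p : Γ.E × Bool} (h : GComp Γ γ p) :
    p.1 ∈ γ.support := by
  rcases p with ⟨e, b⟩
  cases b <;> simp only [GComp, Bool.false_eq_true, if_true, if_false] at h <;>
    exact Finsupp.mem_support_iff.mpr (by change γ e ≠ 0; omega)

lemma GComp.eq_of_fst_eq {γ : Γ.E →₀ ℤ} {p p' : Γ.E × Bool}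
    (h : GComp Γ γ p) (h' : GComp Γ γ p') (hf : p.1 = p'.1) : p = p' := by
  rcases p with ⟨e, b⟩; rcases p' with ⟨e', b'⟩
  cases hf
  cases b <;> cases b' <;>
      simp only [GComp, Bool.false_eq_true, if_true, if_false] at h h' <;>
    first | rfl | omega

lemma exists_gcomp_src {γ : Γ.E →₀ ℤ} (hc : Γ.d1 γ = 0) {v : Γ.V}
    (hin : ∃ p, GComp Γ γ p ∧ Γ.tgt p = v) : ∃ p, GComp Γ γ p ∧ Γ.src p = v := by
  classical
  by_contra hout
  push_neg at hout
  have hv : (Γ.d1 γ) v = ∑ e ∈ γ.support,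
      γ e * ((if (Γ.ends e).2 = v then (1 : ℤ) else 0) -
        (if (Γ.ends e).1 = v then 1 else 0)) := by
    rw [CGraph.d1, Finsupp.sum, Finsupp.finset_sum_apply]
    refine Finset.sum_congr rfl fun e _ => ?_
    simp [Finsupp.single_apply, mul_sub]
  have hzero : (Γ.d1 γ) v = 0 := by rw [hc]; rfl
  have hnonneg : ∀ e ∈ γ.support,
      0 ≤ γ e * ((if (Γ.ends e).2 = v then (1 : ℤ) else 0) -
        (if (Γ.ends e).1 = v then 1 else 0)) := by
    intro e _
    rcases lt_trichotomy (γ e) 0 with hneg | hz | hpos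
    · have h2 : (Γ.ends e).2 ≠ v := by
        intro hv2
        exact hout (e, false) (by simpa [GComp] using hneg) (by simpa [CGraph.src] using hv2)
      rcases eq_or_ne (Γ.ends e).1 v with h1 | h1 <;> simp [h1, h2] <;> nlinarith
    · simp [hz]
    · have h1 : (Γ.ends e).1 ≠ v := by
        intro hv1
        exact hout (e, true) (by simpa [GComp] using hpos) (by simpa [CGraph.src] using hv1)
      rcases eq_or_ne (Γ.ends e).2 v with h2 | h2 <;> simp [h1, h2] <;> nlinarith
  obtain ⟨p, hp, htp⟩ := hin
  have hppos : 0 < γ p.1 * ((if (Γ.ends p.1).2 = v then (1 : ℤ) else 0) -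
      (if (Γ.ends p.1).1 = v then 1 else 0)) := by
    rcases p with ⟨e, b⟩
    cases b
    · simp only [GComp, Bool.false_eq_true, if_false] at hp
      have htp' : (Γ.ends e).1 = v := by simpa [CGraph.tgt] using htp
      have h2 : (Γ.ends e).2 ≠ v := by
        intro hv2
        exact hout (e, false) (by simpa [GComp] using hp) (by simpa [CGraph.src] using hv2)
      simp [htp', h2]; nlinarith
    · simp only [GComp, if_true] at hp
      have htp' : (Γ.ends e).2 = v := by simpa [CGraph.tgt] using htp
      have h1 : (Γ.ends e).1 ≠ v := by
        intro hv1
        exact hout (e, true) (by simpa [GComp] using hp) (by simpa [CGraph.src] using hv1)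
      simp [htp', h1]; nlinarith
  have hpos : 0 < ∑ e ∈ γ.support,
      γ e * ((if (Γ.ends e).2 = v then (1 : ℤ) else 0) -
        (if (Γ.ends e).1 = v then 1 else 0)) :=
    Finset.sum_pos' hnonneg ⟨p.1, hp.mem_support, hppos⟩
  rw [hv] at hzero
  omega

/-- A choice sequence of compatible directed edges forming an infinite walk. -/
noncomputable def compSeq (Γ : CGraph) (γ : Γ.E →₀ ℤ) (hc : Γ.d1 γ = 0)
    (p0 : Γ.E × Bool) (h0 : GComp Γ γ p0) : ℕ → {p : Γ.E × Bool // GComp Γ γ p}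
  | 0 => ⟨p0, h0⟩
  | n + 1 =>
      ⟨Classical.choose (exists_gcomp_src hc
          ⟨(compSeq Γ γ hc p0 h0 n).1, (compSeq Γ γ hc p0 h0 n).2, rfl⟩),
        (Classical.choose_spec (exists_gcomp_src hc
          ⟨(compSeq Γ γ hc p0 h0 n).1, (compSeq Γ γ hc p0 h0 n).2, rfl⟩)).1⟩

lemma compSeq_src (Γ : CGraph) (γ : Γ.E →₀ ℤ) (hc : Γ.d1 γ = 0)
    (p0 : Γ.E × Bool) (h0 : GComp Γ γ p0) (n : ℕ) :
    Γ.src (compSeq Γ γ hc p0 h0 (n + 1)).1 = Γ.tgt (compSeq Γ γ hc p0 h0 n).1 :=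
  (Classical.choose_spec (exists_gcomp_src hc
    ⟨(compSeq Γ γ hc p0 h0 n).1, (compSeq Γ γ hc p0 h0 n).2, rfl⟩)).2

lemma isWalk_of_chain (q : ℕ → Γ.E × Bool)
    (hstep : ∀ n, Γ.src (q (n + 1)) = Γ.tgt (q n)) :
    ∀ (m k : ℕ),
      Γ.IsWalk ((List.range m).map fun t => q (k + t)) (Γ.src (q k)) (Γ.src (q (k + m))) := by
  intro m
  induction m with
  | zero => intro k; simp [CGraph.IsWalk]
  | succ m ih =>
      intro k
      rw [List.range_succ_eq_map, List.map_cons, List.map_map]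
      have hmap : (List.range m).map ((fun t => q (k + t)) ∘ Nat.succ) =
          (List.range m).map fun t => q ((k + 1) + t) := by
        refine List.map_congr_left fun t _ => ?_
        simp only [Function.comp_apply]
        congr 1
        omega
      rw [hmap]
      refine ⟨by simp, ?_⟩
      have := ih (k + 1)
      rw [hstep k] at this
      have hidx : k + 1 + m = k + (m + 1) := by omega
      rw [hidx] at this
      simpa using this

end CGraph

namespace CGraph

variable {Γ : CGraph}

lemma exists_good_loop {γ : Γ.E →₀ ℤ} (hc : Γ.d1 γ = 0) (hne : γ ≠ 0) :
    ∃ l : List (Γ.E × Bool), Γ.IsClosedPath l ∧ (l.map Prod.fst).Nodup ∧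
      (∀ p ∈ l, GComp Γ γ p) ∧ Γ.d1 (Γ.pathCycle l) = 0 := by
  classical
  -- an initial compatible directed edge
  obtain ⟨e0, he0⟩ : ∃ e, γ e ≠ 0 := by
    by_contra hh
    push_neg at hh
    exact hne (Finsupp.ext fun e => hh e)
  obtain ⟨p0, h0⟩ : ∃ p, GComp Γ γ p := by
    rcases lt_or_gt_of_ne he0 with hlt | hgt
    · exact ⟨(e0, false), by simpa [GComp] using hlt⟩
    · exact ⟨(e0, true), by simpa [GComp] using hgt⟩
  set q : ℕ → Γ.E × Bool := fun n => (compSeq Γ γ hc p0 h0 n).1 with hq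
  have hcomp : ∀ n, GComp Γ γ (q n) := fun n => (compSeq Γ γ hc p0 h0 n).2
  have hstep : ∀ n, Γ.src (q (n + 1)) = Γ.tgt (q n) := fun n =>
    compSeq_src Γ γ hc p0 h0 n
  -- pigeonhole on sources
  set T : Finset Γ.V := γ.support.image (fun e => (Γ.ends e).1) ∪
      γ.support.image (fun e => (Γ.ends e).2) with hT
  have hmemT : ∀ n, Γ.src (q n) ∈ T := by
    intro n
    have hs := hcomp n
    rcases hqn : q n with ⟨e, b⟩
    have hes : e ∈ γ.support := by
      have := GComp.mem_support hs
      rwa [hqn] at this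
    cases b
    · exact Finset.mem_union_right _ (Finset.mem_image.mpr ⟨e, hes, by simp [CGraph.src]⟩)
    · exact Finset.mem_union_left _ (Finset.mem_image.mpr ⟨e, hes, by simp [CGraph.src]⟩)
  obtain ⟨a, ha, b, hb, hab, heq⟩ :=
    Finset.exists_ne_map_eq_of_card_lt_of_maps_to
      (s := Finset.range (T.card + 1)) (t := T)
      (by simp) (fun n _ => hmemT n)
  have hP : ∃ j, ∃ i, i < j ∧ Γ.src (q i) = Γ.src (q j) := by
    rcases lt_or_gt_of_ne hab with h | h
    · exact ⟨b, a, h, heq⟩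
    · exact ⟨a, b, h, heq.symm⟩
  set j := Nat.find hP with hjdef
  obtain ⟨i, hij, hsrceq⟩ := Nat.find_spec hP
  have hmin : ∀ m, m < j → ¬ ∃ i', i' < m ∧ Γ.src (q i') = Γ.src (q m) :=
    fun m hm => Nat.find_min hP hm
  set n := j - i with hn
  have hnpos : 0 < n := by omega
  set l : List (Γ.E × Bool) := (List.range n).map (fun k => q (i + k)) with hl
  have hlen : l.length = n := by simp [hl]
  have hget : ∀ (k : ℕ) (hk : k < l.length), l.get ⟨k, hk⟩ = q (i + k) := by
    intro k hk
    simp [hl]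
  -- distinct sources within the loop
  have hdist : ∀ a' b', a' < n → b' < n →
      Γ.src (q (i + a')) = Γ.src (q (i + b')) → a' = b' := by
    intro a' b' ha' hb' hsame
    rcases lt_trichotomy a' b' with h | h | h
    · exact absurd ⟨i + a', by omega, hsame⟩ (hmin (i + b') (by omega))
    · exact h
    · exact absurd ⟨i + b', by omega, hsame.symm⟩ (hmin (i + a') (by omega))
  have hclosed : Γ.IsClosedPath l := by
    constructor
    · intro hnil
      rw [hnil] at hlen
      simp at hlen
      omega
    · intro k
      have hkn : (k : ℕ) < n := by rw [← hlen]; exact k.isLt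
      rw [hget k k.isLt, hget _ (Nat.mod_lt _ k.pos)]
      have hcast : ((k : ℕ) + 1) % l.length = ((k : ℕ) + 1) % n :=
        congrArg (fun z => ((k : ℕ) + 1) % z) hlen
      rw [hcast, ← hstep (i + (k : ℕ))]
      rcases eq_or_lt_of_le (Nat.succ_le_of_lt hkn) with hlast | hmid
      · have hk1 : (k : ℕ) + 1 = n := hlast
        have hmod : ((k : ℕ) + 1) % n = 0 := by rw [hk1]; exact Nat.mod_self n
        rw [hmod, show i + (k : ℕ) + 1 = j from by omega]
        simpa [hjdef] using hsrceq.symm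
      · have hmod : ((k : ℕ) + 1) % n = (k : ℕ) + 1 := Nat.mod_eq_of_lt hmid
        rw [hmod, ← Nat.add_assoc]
  have hmem : ∀ p ∈ l, GComp Γ γ p := by
    intro p hp
    rw [hl] at hp
    obtain ⟨k, _, rfl⟩ := List.mem_map.mp hp
    exact hcomp _
  have hnodup : (l.map Prod.fst).Nodup := by
    rw [hl, List.map_map]
    refine List.Nodup.map_on ?_ (List.nodup_range (n := n))
    intro x hx y hy hxy
    simp only [List.mem_range] at hx hy
    simp only [Function.comp_apply] at hxy
    have hpq : q (i + x) = q (i + y) :=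
      GComp.eq_of_fst_eq (hcomp (i + x)) (hcomp (i + y)) hxy
    exact hdist x y hx hy (by rw [hpq])
  have hwalk : Γ.IsWalk l (Γ.src (q i)) (Γ.src (q (i + n))) :=
    isWalk_of_chain q hstep n i
  have hd1 : Γ.d1 (Γ.pathCycle l) = 0 := by
    rw [d1_pathCycle_of_walk l _ _ hwalk]
    have : i + n = j := by omega
    rw [this, ← hsrceq, sub_self]
  exact ⟨l, hclosed, hnodup, hmem, hd1⟩

lemma l1Z_sub_pathCycle :
    ∀ (l : List (Γ.E × Bool)) (γ : Γ.E →₀ ℤ), (l.map Prod.fst).Nodup →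
      (∀ p ∈ l, GComp Γ γ p) →
      l1Z (γ - Γ.pathCycle l) + l.length = l1Z γ
  | [], γ, _, _ => by simp [pathCycle_nil]
  | p :: l, γ, hnd, hcomp => by
      classical
      set s : ℤ := if p.2 then 1 else -1 with hs
      rw [List.map_cons] at hnd
      have hnd' := List.nodup_cons.mp hnd
      -- the head edge is not among the tail edges
      have hhead : p.1 ∉ l.map Prod.fst := hnd'.1
      set γ' : Γ.E →₀ ℤ := γ - Finsupp.single p.1 s with hγ'
      have hagree : ∀ p' ∈ l, γ' p'.1 = γ p'.1 := by
        intro p' hp'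
        have hne : p.1 ≠ p'.1 := by
          intro hpe
          exact hhead (hpe ▸ List.mem_map.mpr ⟨p', hp', rfl⟩)
        simp [hγ', Finsupp.single_apply, hne]
      have hcomp' : ∀ p' ∈ l, GComp Γ γ' p' := by
        intro p' hp'
        have := hcomp p' (List.mem_cons_of_mem _ hp')
        rcases p' with ⟨e, b⟩
        cases b <;> simpa [GComp, hagree ⟨e, _⟩ hp'] using this
      have ih := l1Z_sub_pathCycle l γ' hnd'.2 hcomp'
      have hsingle : l1Z (Finsupp.single p.1 s) = 1 := by
        have : l1Z (Finsupp.single p.1 s) = s.natAbs := by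
          rw [l1Z]
          exact Finsupp.sum_single_index (by simp)
        rw [this, hs]
        rcases p with ⟨e, b⟩
        cases b <;> simp
      have hcp := hcomp p List.mem_cons_self
      have key := l1Z_sub_add (a := γ) (b := Finsupp.single p.1 s) (fun e => by
        rcases eq_or_ne e p.1 with rfl | hne
        · rw [Finsupp.single_eq_same]
          rcases hb : p.2 with _ | _ <;>
            simp only [GComp, hb, Bool.false_eq_true, if_true, if_false] at hcp <;>
            simp only [hs, hb, Bool.false_eq_true, if_true, if_false] <;> omega
        · simp [Finsupp.single_apply, Ne.symm hne])
      have hone : l1Z γ' + 1 = l1Z γ := by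
        rw [hγ', ← hsingle]
        exact key
      have heq : γ - Γ.pathCycle (p :: l) = γ' - Γ.pathCycle l := by
        rw [pathCycle_cons, hγ', ← hs]
        abel
      rw [heq, List.length_cons]
      omega

end CGraph



namespace TwoComplex

variable {X : TwoComplex}

lemma d2_zero : X.d2 0 = 0 := by simp [TwoComplex.d2]

lemma d2_add (a b : X.F →₀ ℤ) : X.d2 (a + b) = X.d2 a + X.d2 b :=
  Finsupp.sum_add_index' (by simp) (fun e c1 c2 => add_smul c1 c2 _)

lemma exists_filling (X : TwoComplex) (f : ℕ → ℕ)
    (hiso : ∀ l : List (X.E × Bool), X.toCGraph.IsClosedPath l →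
      ∃ μ : X.F →₀ ℤ, X.d2 μ = X.toCGraph.pathCycle l ∧ l1Z μ ≤ f l.length) :
    ∀ (N : ℕ) (γ : X.E →₀ ℤ), l1Z γ ≤ N → X.toCGraph.d1 γ = 0 →
      ∃ (μ : X.F →₀ ℤ) (lst : List ℕ), X.d2 μ = γ ∧ (∀ x ∈ lst, 0 < x) ∧
        lst.sum ≤ l1Z γ ∧ l1Z μ ≤ (lst.map f).sum := by
  intro N
  induction N with
  | zero =>
      intro γ hγ _
      have hγ0 : γ = 0 := l1Z_eq_zero (Nat.le_zero.mp hγ)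
      subst hγ0
      exact ⟨0, [], d2_zero, by simp, by simp, by simp [l1Z_zero]⟩
  | succ N ih =>
      intro γ hγ hc
      by_cases h0 : γ = 0
      · subst h0
        exact ⟨0, [], d2_zero, by simp, by simp, by simp [l1Z_zero]⟩
      · obtain ⟨l, hcp, hnd, hcompat, hd1l⟩ := CGraph.exists_good_loop hc h0
        set γ' : X.E →₀ ℤ := γ - X.toCGraph.pathCycle l with hγ'
        have hnorm : l1Z γ' + l.length = l1Z γ :=
          CGraph.l1Z_sub_pathCycle l γ hnd hcompat
        have hlpos : 0 < l.length := List.length_pos_iff.mpr hcp.1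
        have hγ'N : l1Z γ' ≤ N := by omega
        have hc' : X.toCGraph.d1 γ' = 0 := by
          rw [hγ', CGraph.d1_sub, hc, hd1l, sub_zero]
        obtain ⟨μ', lst', hμ'd, hpos', hsum', hl1'⟩ := ih γ' hγ'N hc'
        obtain ⟨μ₀, hμ₀d, hμ₀n⟩ := hiso l hcp
        refine ⟨μ₀ + μ', l.length :: lst', ?_, ?_, ?_, ?_⟩
        · rw [d2_add, hμ₀d, hμ'd, hγ']
          abel
        · intro x hx
          rcases List.mem_cons.mp hx with rfl | hx'
          · exact hlpos
          · exact hpos' x hx'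
        · simp only [List.sum_cons]
          omega
        · calc l1Z (μ₀ + μ') ≤ l1Z μ₀ + l1Z μ' := l1Z_add_le _ _
            _ ≤ f l.length + (lst'.map f).sum := Nat.add_le_add hμ₀n hl1'
            _ = ((l.length :: lst').map f).sum := by simp

end TwoComplex

lemma sum_map_le_closure (f : ℕ → ℕ) (hmono : Monotone f) (n : ℕ) (lst : List ℕ)
    (hpos : ∀ x ∈ lst, 0 < x) (hsum : lst.sum ≤ n) :
    (lst.map f).sum ≤ superadditiveClosure f n := by
  have hbdd : BddAbove {m : ℕ | ∃ l : List ℕ,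
      (∀ x ∈ l, 0 < x) ∧ l.sum = n ∧ (l.map f).sum = m} := by
    refine ⟨n * f n, fun m hm => ?_⟩
    obtain ⟨l, hp, hs, hfs⟩ := hm
    have hlen : l.length ≤ l.sum := by
      have := List.length_le_sum_of_one_le l (fun x hx => hp x hx)
      simpa using this
    have hbound : (l.map f).sum ≤ l.length * f n := by
      have := List.sum_le_card_nsmul (l.map f) (f n) (by
        intro x hx
        obtain ⟨y, hy, rfl⟩ := List.mem_map.mp hx
        exact hmono (hs ▸ List.le_sum_of_mem hy))
      simpa [smul_eq_mul] using this
    calc m = (l.map f).sum := hfs.symm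
      _ ≤ l.length * f n := hbound
      _ ≤ n * f n := Nat.mul_le_mul_right _ (by omega)
  rcases lst with _ | ⟨a, rest⟩
  · simp
  · set lst2 : List ℕ := (a + (n - (a :: rest).sum)) :: rest with hlst2
    have hmem : (lst2.map f).sum ∈ {m : ℕ | ∃ l : List ℕ,
        (∀ x ∈ l, 0 < x) ∧ l.sum = n ∧ (l.map f).sum = m} := by
      refine ⟨lst2, ?_, ?_, rfl⟩
      · intro x hx
        rcases List.mem_cons.mp hx with rfl | hx'
        · have := hpos a List.mem_cons_self
          omega
        · exact hpos x (List.mem_cons_of_mem _ hx')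
      · have hsum' : a + rest.sum ≤ n := by simpa using hsum
        simp only [hlst2, List.sum_cons]
        simp only [List.sum_cons] at *
        omega
    have hle2 : ((a :: rest).map f).sum ≤ (lst2.map f).sum := by
      simp only [hlst2, List.map_cons, List.sum_cons]
      exact Nat.add_le_add_right (hmono (Nat.le_add_right _ _)) _
    exact le_trans hle2 (le_csSup hbdd hmem)

/-- If every closed edge path P of X bounds a 2-chain of norm at most
f(|P|) (as furnished by van Kampen diagrams of area ≤ f(|P|) in a simply connected
complex with isoperimetric function f), then FV_{X,ℤ}(n) ≤ f̄(n), the superadditive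
closure of f. -/
theorem FV_le_superadditive_closure (X : TwoComplex) (f : ℕ → ℕ) (hmono : Monotone f)
    (hiso : ∀ l : List (X.E × Bool), X.toCGraph.IsClosedPath l →
      ∃ μ : X.F →₀ ℤ, X.d2 μ = X.toCGraph.pathCycle l ∧ l1Z μ ≤ f l.length) :
    ∀ n : ℕ, X.FV n ≤ (superadditiveClosure f n : ℕ∞) := by
  intro n
  rw [TwoComplex.FV]
  refine iSup₂_le fun γ hγ => ?_
  obtain ⟨hcyc, hle⟩ := hγ
  obtain ⟨μ, lst, hd, hpos, hsum, hl1⟩ :=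
    TwoComplex.exists_filling X f hiso (l1Z γ) γ le_rfl hcyc
  have h1 : X.fillNorm γ ≤ (l1Z μ : ℕ∞) := by
    rw [TwoComplex.fillNorm]
    exact iInf₂_le μ hd
  have h2 : l1Z μ ≤ superadditiveClosure f n :=
    le_trans hl1 (sum_map_le_closure f hmono n lst hpos (le_trans hsum hle))
  exact le_trans h1 (by exact_mod_cast h2)
end
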